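/- arXiv:1106.5138 — 2 statements merged into one kernel-verified Lean document; each statement's English description precedes it below -/
import Mathlib

section
/- Let z : ℤ → ℝ be a discrete path on {-N,…,0} with z[-N] = 0 and z[-N] - z[-N+1] ≤ K, and suppose z[0] ≥ -F·N, where F, K ≥ 0 and Δ_d z[i] + F̄ has positive part bounded in sum, with F̄ > 0. Then F̄·N(N-1)/2 - (F+K)·N ≤ 2(N-1)·∑_{i=-N+1}^{-1} (Δ_d z[i] + F̄)₊. -/
open Finset

private lemma tele_aux (f : ℤ → ℝ) (a : ℤ) : ∀ b, a ≤ b →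
    f b - f a = ∑ i ∈ Ico a b, (f (i+1) - f i) := by
  refine Int.le_induction ?_ ?_
  · simp
  · intro b hb ih
    have hins : Ico a (b+1) = insert b (Ico a b) := by ext x; simp; omega
    rw [hins, Finset.sum_insert (by simp), ← ih]; ring

private lemma gauss_aux (n : ℕ) :
    ∑ i ∈ Ico (-(n:ℤ)) 0, ((i:ℝ) + n) = n*(n-1)/2 := by
  induction n with
  | zero => simp
  | succ n ih =>
    have hins : Ico (-((n:ℤ)+1)) 0 = insert (-((n:ℤ)+1)) (Ico (-(n:ℤ)) 0) := by
      ext x; simp; omega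
    have hnotmem : (-((n:ℤ)+1)) ∉ Ico (-(n:ℤ)) 0 := by simp
    have hcard : (Ico (-(n:ℤ)) 0).card = n := by
      rw [Int.card_Ico]; simp
    push_cast
    rw [hins, Finset.sum_insert hnotmem]
    have hre : ∑ i ∈ Ico (-(n:ℤ)) 0, ((i:ℝ) + ((n:ℝ)+1))
        = ∑ i ∈ Ico (-(n:ℤ)) 0, (((i:ℝ) + n) + 1) := by
      apply Finset.sum_congr rfl; intros; ring
    rw [hre, Finset.sum_add_distrib, ih, Finset.sum_const, hcard]
    push_cast; ring

theorem crossing_laplacian_bound (N : ℕ) (hN : 2 ≤ N) (z : ℤ → ℝ) (F K Fbar : ℝ)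
    (hF : 0 ≤ F) (hK : 0 ≤ K) (hFbar : 0 ≤ Fbar)
    (hz0 : z (-(N : ℤ)) = 0)
    (hgrad : -(z (-(N : ℤ)) - z (-(N : ℤ) + 1)) ≤ K)
    (hcross : z 0 ≥ -F * N) :
    Fbar * N * (N - 1) / 2 - (F + K) * N ≤
      2 * (N - 1) *
        ∑ i ∈ Icc (-(N : ℤ) + 1) (-1),
          max ((z (i + 1) - 2 * z i + z (i - 1)) + Fbar) 0 := by
  set m : ℤ → ℝ := fun j => max ((z (j + 1) - 2 * z j + z (j - 1)) + Fbar) 0 with hm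
  set S : ℝ := ∑ i ∈ Icc (-(N : ℤ) + 1) (-1), m i with hSdef
  have hm0 : ∀ j, 0 ≤ m j := fun j => le_max_right _ _
  have hS0 : 0 ≤ S := Finset.sum_nonneg fun i _ => hm0 i
  set g : ℤ → ℝ := fun i => z (i+1) - z i with hg
  have hN2 : (2:ℝ) ≤ (N:ℝ) := by exact_mod_cast hN
  -- key pointwise bound on gradients
  have key : ∀ i ∈ Ico (-(N:ℤ)) 0, g i ≤ g (-(N:ℤ)) + S - Fbar * ((i:ℝ) + N) := by
    intro i hi
    simp only [Finset.mem_Ico] at hi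
    have h1 : g i - g (-(N:ℤ)) = ∑ j ∈ Ico (-(N:ℤ)) i, (g (j+1) - g j) :=
      tele_aux g _ _ hi.1
    have h2 : ∀ j ∈ Ico (-(N:ℤ)) i, g (j+1) - g j ≤ m (j+1) - Fbar := by
      intro j hj
      have e : g (j+1) - g j = (z (j+1+1) - 2 * z (j+1) + z (j+1-1)) + Fbar - Fbar := by
        have e1 : (j:ℤ)+1-1 = j := by ring
        simp only [hg, e1]; ring
      rw [e]
      have : z (j+1+1) - 2 * z (j+1) + z (j+1-1) + Fbar ≤ m (j+1) := le_max_left _ _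
      linarith
    have h3 : ∑ j ∈ Ico (-(N:ℤ)) i, (g (j+1) - g j)
        ≤ ∑ j ∈ Ico (-(N:ℤ)) i, (m (j+1) - Fbar) := Finset.sum_le_sum h2
    have hcard : ((Ico (-(N:ℤ)) i).card : ℝ) = (i:ℝ) + N := by
      rw [Int.card_Ico]
      have heq : i - (-(N:ℤ)) = i + N := by ring
      rw [heq]
      have hnn : (0:ℤ) ≤ i + N := by omega
      have h' : ((i + (N:ℤ)).toNat : ℤ) = i + N := Int.toNat_of_nonneg hnn
      exact_mod_cast h'
    have h4 : ∑ j ∈ Ico (-(N:ℤ)) i, (m (j+1) - Fbar)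
        = ∑ j ∈ Ico (-(N:ℤ)) i, m (j+1) - Fbar * ((i:ℝ) + N) := by
      rw [Finset.sum_sub_distrib, Finset.sum_const, nsmul_eq_mul, hcard]
      ring
    have h5 : ∑ j ∈ Ico (-(N:ℤ)) i, m (j+1)
        = ∑ j ∈ Ico (-(N:ℤ)+1) (i+1), m j := by
      rw [← Finset.map_add_right_Ico _ _ 1, Finset.sum_map]
      rfl
    have h6 : ∑ j ∈ Ico (-(N:ℤ)+1) (i+1), m j ≤ S := by
      apply Finset.sum_le_sum_of_subset_of_nonneg
      · intro x hx
        simp only [Finset.mem_Ico] at hx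
        simp only [Finset.mem_Icc]
        omega
      · intro x _ _; exact hm0 x
    have h7 : ∑ j ∈ Ico (-(N:ℤ)) i, (m (j+1) - Fbar) ≤ S - Fbar * ((i:ℝ) + N) := by
      rw [h4, h5]; linarith [h6]
    linarith [h1, h3, h7]
  -- sum over i
  have hz0sum : z 0 = ∑ i ∈ Ico (-(N:ℤ)) 0, g i := by
    have h := tele_aux z (-(N:ℤ)) 0 (by omega)
    rw [hz0, sub_zero] at h
    exact h
  have hcardN : (Ico (-(N:ℤ)) 0).card = N := by
    rw [Int.card_Ico]; simp
  have hsum : ∑ i ∈ Ico (-(N:ℤ)) 0, g i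
      ≤ ∑ i ∈ Ico (-(N:ℤ)) 0, (g (-(N:ℤ)) + S - Fbar * ((i:ℝ) + N)) :=
    Finset.sum_le_sum key
  have hrhs : ∑ i ∈ Ico (-(N:ℤ)) 0, (g (-(N:ℤ)) + S - Fbar * ((i:ℝ) + N))
      = (N:ℝ) * (g (-(N:ℤ)) + S) - Fbar * ((N:ℝ)*((N:ℝ)-1)/2) := by
    rw [Finset.sum_sub_distrib, Finset.sum_const, hcardN, ← Finset.mul_sum, gauss_aux]
    all_goals rw [nsmul_eq_mul]
  have hgK : g (-(N:ℤ)) ≤ K := by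
    simp only [hg]
    linarith [hgrad]
  have hNpos : (0:ℝ) ≤ (N:ℝ) := by positivity
  have hfinal : z 0 ≤ (N:ℝ) * (K + S) - Fbar * ((N:ℝ)*((N:ℝ)-1)/2) := by
    have h7 : z 0 ≤ (N:ℝ) * (g (-(N:ℤ)) + S) - Fbar * ((N:ℝ)*((N:ℝ)-1)/2) := by
      rw [hz0sum, ← hrhs]; exact hsum
    nlinarith [hgK, hNpos]
  have hprod : (0:ℝ) ≤ ((N:ℝ) - 2) * S :=
    mul_nonneg (by linarith) hS0
  nlinarith [hprod, hcross, hfinal]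
end

section
/- Let v be C¹ on [a-δ, b+δ] with v convex on [b-δ, b+δ], v'' ≥ -F on [a, b-δ] (in fact v'' = -F there). Let w be the affine function on [a, b+δ] with w(a) = v(a) and w(b+δ) = v(b-δ) + 2δ v'(b-δ). Then w ≤ v on [a, b+δ]. -/
open Set

theorem affine_below_path (δ F a b : ℝ) (hδ : 0 < δ) (hab : a < b - δ) (hF : 0 ≤ F)
    (v v' : ℝ → ℝ)
    (hderiv : ∀ x ∈ Icc a (b + δ), HasDerivAt v (v' x) x)
    (hode : ∀ x ∈ Icc a (b - δ), HasDerivAt v' (-F) x)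
    (hconv : MonotoneOn v' (Icc (b - δ) (b + δ)))
    (w : ℝ → ℝ)
    (hw : ∀ x, w x = v a + (x - a) / (b + δ - a) * ((v (b - δ) + 2 * δ * v' (b - δ)) - v a)) :
    ∀ x ∈ Icc a (b + δ), w x ≤ v x := by
  have hcd : b - δ < b + δ := by linarith
  have had : a < b + δ := by linarith
  -- MVT for v on subintervals of [a, b+δ]
  have mvt : ∀ p q, a ≤ p → p < q → q ≤ b + δ →
      ∃ ξ ∈ Ioo p q, v q - v p = v' ξ * (q - p) := by
    intro p q hp hpq hq
    have hc : ContinuousOn v (Icc p q) := fun z hz =>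
      ((hderiv z ⟨le_trans hp hz.1, le_trans hz.2 hq⟩).continuousAt).continuousWithinAt
    obtain ⟨ξ, hξ, h⟩ := exists_hasDerivAt_eq_slope v v' hpq hc
      (fun z hz => hderiv z ⟨le_trans hp hz.1.le, le_trans hz.2.le hq⟩)
    refine ⟨ξ, hξ, ?_⟩
    have hne : q - p ≠ 0 := by linarith
    have := (div_eq_iff hne).mp h.symm
    linarith [this]
  -- v' is antitone on [a, b-δ]
  have hanti : ∀ x ∈ Icc a (b - δ), ∀ y ∈ Icc a (b - δ), x ≤ y → v' y ≤ v' x := by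
    intro x hx y hy hxy
    rcases eq_or_lt_of_le hxy with rfl | hxy
    · exact le_refl _
    have hc : ContinuousOn v' (Icc x y) := fun z hz =>
      ((hode z ⟨le_trans hx.1 hz.1, le_trans hz.2 hy.2⟩).continuousAt).continuousWithinAt
    obtain ⟨ξ, hξ, h⟩ := exists_hasDerivAt_eq_slope v' (fun _ => -F) hxy hc
      (fun z hz => hode z ⟨le_trans hx.1 hz.1.le, le_trans hz.2.le hy.2⟩)
    have hne : y - x ≠ 0 := by linarith
    have h2 : v' y - v' x = -F * (y - x) := (div_eq_iff hne).mp h.symm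
    nlinarith [h2]
  -- key fact K1 : (b-δ-a) * v'(b-δ) ≤ v (b-δ) - v a
  have K1 : (b - δ - a) * v' (b - δ) ≤ v (b - δ) - v a := by
    obtain ⟨ξ, hξ, h⟩ := mvt a (b - δ) le_rfl hab (by linarith)
    have : v' (b - δ) ≤ v' ξ :=
      hanti ξ ⟨hξ.1.le, hξ.2.le⟩ (b - δ) ⟨by linarith, le_rfl⟩ hξ.2.le
    nlinarith [this, h]
  intro x hx
  rw [hw x]
  have hden : (0 : ℝ) < b + δ - a := by linarith
  rw [div_mul_eq_mul_div, ← sub_nonneg]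
  rw [show v x - (v a + (x - a) * (v (b - δ) + 2 * δ * v' (b - δ) - v a) / (b + δ - a))
      = ((v x - v a) * (b + δ - a) - (x - a) * (v (b - δ) + 2 * δ * v' (b - δ) - v a)) / (b + δ - a)
      by field_simp; ring]
  apply div_nonneg _ hden.le
  rw [sub_nonneg]
  rcases le_or_gt x (b - δ) with hxc | hxc
  · -- x ∈ [a, b-δ]
    rcases eq_or_lt_of_le hx.1 with rfl | hax
    · simp
    -- K2 : v'(b-δ)*(x-a) ≤ v x - v a
    obtain ⟨ξ₁, hξ₁, h₁⟩ := mvt a x le_rfl hax (by linarith)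
    have K2 : v' (b - δ) * (x - a) ≤ v x - v a := by
      have : v' (b - δ) ≤ v' ξ₁ :=
        hanti ξ₁ ⟨hξ₁.1.le, by linarith [hξ₁.2]⟩ (b - δ) ⟨by linarith, le_rfl⟩ (by linarith [hξ₁.2])
      nlinarith [this, h₁, hξ₁.1, hξ₁.2]
    -- K3 : chord inequality (v(b-δ) - v a)*(x-a) ≤ (v x - v a)*(b-δ-a)
    have K3 : (v (b - δ) - v a) * (x - a) ≤ (v x - v a) * (b - δ - a) := by
      rcases eq_or_lt_of_le hxc with rfl | hxc'
      · linarith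
      obtain ⟨ξ₂, hξ₂, h₂⟩ := mvt x (b - δ) hx.1 hxc' (by linarith)
      have hle : v' ξ₂ ≤ v' ξ₁ :=
        hanti ξ₁ ⟨hξ₁.1.le, by linarith [hξ₁.2]⟩ ξ₂ ⟨by linarith [hξ₂.1], hξ₂.2.le⟩
          (by linarith [hξ₁.2, hξ₂.1])
      nlinarith [mul_le_mul_of_nonneg_right hle
          (mul_nonneg (by linarith : (0:ℝ) ≤ b - δ - x) (by linarith : (0:ℝ) ≤ x - a)),
        mul_le_mul_of_nonneg_right (le_of_eq h₁) (by linarith : (0:ℝ) ≤ b - δ - x),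
        mul_le_mul_of_nonneg_right (le_of_eq h₂) (by linarith : (0:ℝ) ≤ x - a), h₁, h₂]
    nlinarith [K2, K3, hδ]
  · -- x ∈ (b-δ, b+δ]
    -- tangent inequality
    obtain ⟨ξ, hξ, h⟩ := mvt (b - δ) x (by linarith) hxc hx.2
    have T : v' (b - δ) * (x - (b - δ)) ≤ v x - v (b - δ) := by
      have : v' (b - δ) ≤ v' ξ :=
        hconv ⟨le_rfl, by linarith⟩ ⟨hξ.1.le, by linarith [hξ.2, hx.2]⟩ hξ.1.le
      nlinarith [this, h, hξ.1]
    have Ic : (0:ℝ) ≤ (v (b - δ) - v a) * (b + δ - a)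
        - (b - δ - a) * (v (b - δ) + 2 * δ * v' (b - δ) - v a) := by
      nlinarith [K1, hδ]
    have h1 : (0:ℝ) ≤ (b + δ - x) * ((v (b - δ) - v a) * (b + δ - a)
        - (b - δ - a) * (v (b - δ) + 2 * δ * v' (b - δ) - v a)) :=
      mul_nonneg (by linarith [hx.2]) Ic
    have h2 : (0:ℝ) ≤ ((b + δ - a) * (2 * δ)) * (v x - v (b - δ) - v' (b - δ) * (x - (b - δ))) :=
      mul_nonneg (by nlinarith) (by linarith [T])
    nlinarith [h1, h2]
end
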